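/- Let S = [0,1]×[0,1], let a ≥ 1 and 1<p<2, and let R = [0,a]×[0,a^{p−1}]. Let f : (∂S, ‖·‖_{a,p}) → (∂R, |·|) be an orientation-preserving L-bilipschitz homeomorphism mapping the edges of S to the edges of R, where ‖(x₁,x₂)‖_{a,p} = max{a|x₁|, a^{p−1}|x₂|} and |·| is the Euclidean norm. Then there exists a homeomorphism F : S → R extending f such that (1/C(L,p)) J_F ≤ |DF|^p ≤ C(L,p) J_F almost everywhere in S, where the constant C(L,p) depends only on L and p, |DF| is the operator norm of the differential of F and J_F its Jacobian determinant. -/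

import Mathlib

open Complex MeasureTheory Metric Set

noncomputable section

/-- The closed axis-parallel rectangle `[0,w] × [0,h]` in `ℂ = ℝ²`. -/
def rectC (w h : ℝ) : Set ℂ := {z : ℂ | z.re ∈ Set.Icc 0 w ∧ z.im ∈ Set.Icc 0 h}

/-- Bottom edge of `[0,w] × [0,h]`. -/
def bottomE (w h : ℝ) : Set ℂ := {z : ℂ | z.im = 0 ∧ z.re ∈ Set.Icc 0 w}

/-- Top edge of `[0,w] × [0,h]`. -/
def topE (w h : ℝ) : Set ℂ := {z : ℂ | z.im = h ∧ z.re ∈ Set.Icc 0 w}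

/-- Left edge of `[0,w] × [0,h]`. -/
def leftE (w h : ℝ) : Set ℂ := {z : ℂ | z.re = 0 ∧ z.im ∈ Set.Icc 0 h}

/-- Right edge of `[0,w] × [0,h]`. -/
def rightE (w h : ℝ) : Set ℂ := {z : ℂ | z.re = w ∧ z.im ∈ Set.Icc 0 h}

/-- Boundary of `[0,w] × [0,h]`. -/
def bdryC (w h : ℝ) : Set ℂ := bottomE w h ∪ topE w h ∪ leftE w h ∪ rightE w h

/-- The distance induced by the modified sup-norm `‖(x₁,x₂)‖_{a,p} = max (a|x₁|) (a^(p-1)|x₂|)`. -/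
def dap (a p : ℝ) (x y : ℂ) : ℝ :=
  max (a * |x.re - y.re|) (a ^ (p - 1) * |x.im - y.im|)

/-! ### Auxiliary definitions and lemmas -/

lemma bottomE_subset_bdryC (w h : ℝ) : bottomE w h ⊆ bdryC w h :=
  fun _ hz => Or.inl (Or.inl (Or.inl hz))
lemma topE_subset_bdryC (w h : ℝ) : topE w h ⊆ bdryC w h :=
  fun _ hz => Or.inl (Or.inl (Or.inr hz))
lemma leftE_subset_bdryC (w h : ℝ) : leftE w h ⊆ bdryC w h :=
  fun _ hz => Or.inl (Or.inr hz)
lemma rightE_subset_bdryC (w h : ℝ) : rightE w h ⊆ bdryC w h :=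
  fun _ hz => Or.inr hz

/-- Clamping to `[0,1]`. -/
def clmp (t : ℝ) : ℝ := max 0 (min t 1)

lemma clmp_mem (t : ℝ) : clmp t ∈ Icc (0:ℝ) 1 := ⟨le_max_left _ _, by simp [clmp]⟩

lemma clmp_eq {t : ℝ} (h : t ∈ Icc (0:ℝ) 1) : clmp t = t := by
  simp [clmp, min_eq_left h.2, max_eq_right h.1]

lemma clmp_idem (t : ℝ) : clmp (clmp t) = clmp t := clmp_eq (clmp_mem t)

lemma clmp_lip (s t : ℝ) : |clmp s - clmp t| ≤ |s - t| := by
  have h1 : |clmp s - clmp t| ≤ |min s 1 - min t 1| := by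
    exact (by simpa [max_comm] using abs_max_sub_max_le_abs (min s 1) (min t 1) 0 :
      |max 0 (min s 1) - max 0 (min t 1)| ≤ |min s 1 - min t 1|)
  have h2 : |min s 1 - min t 1| ≤ max |s - t| |(1:ℝ) - 1| := abs_min_sub_min_le_max s 1 t 1
  simp at h2
  exact le_trans h1 h2

/-- The continuous real-linear map `ℂ → ℂ` given by the 2×2 matrix `!![A, B; C, D]`. -/
def mk2 (A B C D : ℝ) : ℂ →L[ℝ] ℂ :=
  ((A • reCLM + B • imCLM).smulRight (1:ℂ)) + ((C • reCLM + D • imCLM).smulRight (I:ℂ))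

@[simp] lemma mk2_re (A B C D : ℝ) (w : ℂ) : (mk2 A B C D w).re = A * w.re + B * w.im := by
  simp [mk2, Complex.real_smul]

@[simp] lemma mk2_im (A B C D : ℝ) (w : ℂ) : (mk2 A B C D w).im = C * w.re + D * w.im := by
  simp [mk2, Complex.real_smul]

lemma mk2_comp (A B C D A' B' C' D' : ℝ) :
    (mk2 A B C D).comp (mk2 A' B' C' D') =
      mk2 (A*A' + B*C') (A*B' + B*D') (C*A' + D*C') (C*B' + D*D') := by
  refine ContinuousLinearMap.ext fun w => ?_
  apply Complex.ext <;> · simp; ring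

lemma mk2_det (A B C D : ℝ) : (mk2 A B C D).det = A * D - B * C := by
  have h : (mk2 A B C D).det = LinearMap.det ((mk2 A B C D) : ℂ →ₗ[ℝ] ℂ) := rfl
  rw [h, ← LinearMap.det_toMatrix Complex.basisOneI, Matrix.det_fin_two]
  simp [LinearMap.toMatrix_apply, Complex.coe_basisOneI_repr]

lemma mk2_norm_le (A B C D : ℝ) : ‖mk2 A B C D‖ ≤ |A| + |B| + |C| + |D| := by
  refine ContinuousLinearMap.opNorm_le_bound _ (by positivity) fun w => ?_
  have h1 : ‖mk2 A B C D w‖ ≤ |(mk2 A B C D w).re| + |(mk2 A B C D w).im| :=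
    Complex.norm_le_abs_re_add_abs_im _
  have hre : |w.re| ≤ ‖w‖ := Complex.abs_re_le_norm w
  have him : |w.im| ≤ ‖w‖ := Complex.abs_im_le_norm w
  have h2 : |(mk2 A B C D w).re| ≤ |A| * ‖w‖ + |B| * ‖w‖ := by
    rw [mk2_re]
    calc |A * w.re + B * w.im| ≤ |A * w.re| + |B * w.im| := abs_add_le _ _
    _ ≤ |A| * ‖w‖ + |B| * ‖w‖ := by rw [abs_mul, abs_mul]; gcongr
  have h3 : |(mk2 A B C D w).im| ≤ |C| * ‖w‖ + |D| * ‖w‖ := by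
    rw [mk2_im]
    calc |C * w.re + D * w.im| ≤ |C * w.re| + |D * w.im| := abs_add_le _ _
    _ ≤ |C| * ‖w‖ + |D| * ‖w‖ := by rw [abs_mul, abs_mul]; gcongr
  nlinarith [norm_nonneg w]

/-! ### One-dimensional lemmas -/

section oneD
variable {L : ℝ} (hL : 1 ≤ L) {g : ℝ → ℝ}
  (hg : ∀ t, g t = g (clmp t))
  (hbl : ∀ s ∈ Icc (0:ℝ) 1, ∀ t ∈ Icc (0:ℝ) 1,
    (1/L) * |s - t| ≤ |g s - g t| ∧ |g s - g t| ≤ L * |s - t|)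
  (h0 : g 0 = 0) (h1 : g 1 = 1)

include hL hbl

include hg in
lemma oneD_lip : LipschitzWith (Real.toNNReal L) g := by
  apply LipschitzWith.of_dist_le_mul
  intro s t
  rw [Real.dist_eq, Real.dist_eq, Real.coe_toNNReal _ (le_trans zero_le_one hL)]
  calc |g s - g t| = |g (clmp s) - g (clmp t)| := by rw [← hg, ← hg]
  _ ≤ L * |clmp s - clmp t| := (hbl _ (clmp_mem s) _ (clmp_mem t)).2
  _ ≤ L * |s - t| := by
      have := clmp_lip s t
      nlinarith [abs_nonneg (clmp s - clmp t)]

lemma oneD_inj : InjOn g (Icc 0 1) := by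
  intro s hs t ht hst
  have hL0 : 0 < L := lt_of_lt_of_le zero_lt_one hL
  have h := (hbl s hs t ht).1
  rw [hst, sub_self, abs_zero] at h
  have h2 : |s - t| ≤ 0 := by
    by_contra hc
    push_neg at hc
    nlinarith [one_div_pos.mpr hL0]
  have := le_antisymm h2 (abs_nonneg _)
  rwa [abs_eq_zero, sub_eq_zero] at this

include h0 h1

lemma oneD_mono (hc : Continuous g) : StrictMonoOn g (Icc 0 1) :=
  ContinuousOn.strictMonoOn_of_injOn_Icc zero_le_one (by rw [h0, h1]; exact zero_le_one)
    hc.continuousOn (oneD_inj hL hbl)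

lemma oneD_deriv (hc : Continuous g) {t : ℝ} (ht : t ∈ Ioo (0:ℝ) 1)
    (hd : DifferentiableAt ℝ g t) : deriv g t ∈ Icc (1/L) L := by
  have hmono := oneD_mono hL hbl h0 h1 hc
  have hten : Filter.Tendsto (slope g t) (nhdsWithin t {t}ᶜ) (nhds (deriv g t)) :=
    (hasDerivAt_iff_tendsto_slope).1 hd.hasDerivAt
  have hev : ∀ᶠ s in nhdsWithin t {t}ᶜ, 1/L ≤ slope g t s ∧ slope g t s ≤ L := by
    filter_upwards [eventually_nhdsWithin_of_eventually_nhds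
      (Ioo_mem_nhds ht.1 ht.2), eventually_mem_nhdsWithin] with s hs hsne
    have hsne' : (s : ℝ) ≠ t := hsne
    have hsI : s ∈ Icc (0:ℝ) 1 := Ioo_subset_Icc_self hs
    have htI : t ∈ Icc (0:ℝ) 1 := Ioo_subset_Icc_self ht
    have hb := hbl s hsI t htI
    have hslope : slope g t s = (g s - g t) / (s - t) := slope_def_field g t s
    rcases lt_or_gt_of_ne hsne' with hlt | hgt
    · have hgs : g s < g t := hmono hsI htI hlt
      have habs1 : |g s - g t| = g t - g s := by rw [abs_sub_comm, abs_of_pos (by linarith)]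
      have habs2 : |s - t| = t - s := by rw [abs_sub_comm, abs_of_pos (by linarith)]
      rw [habs1, habs2] at hb
      have hslope2 : slope g t s = (g t - g s) / (t - s) := by
        rw [hslope, ← neg_div_neg_eq]; ring_nf
      have hu : (0:ℝ) < t - s := by linarith
      constructor
      · rw [hslope2, le_div_iff₀ hu]; linarith [hb.1]
      · rw [hslope2, div_le_iff₀ hu]; linarith [hb.2]
    · have hgs : g t < g s := hmono htI hsI hgt
      have habs1 : |g s - g t| = g s - g t := abs_of_pos (by linarith)
      have habs2 : |s - t| = s - t := abs_of_pos (by linarith)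
      rw [habs1, habs2] at hb
      have hu : (0:ℝ) < s - t := by linarith
      constructor
      · rw [hslope, le_div_iff₀ hu]; linarith [hb.1]
      · rw [hslope, div_le_iff₀ hu]; linarith [hb.2]
  exact ⟨ge_of_tendsto hten (hev.mono fun s h => h.1),
         le_of_tendsto hten (hev.mono fun s h => h.2)⟩

lemma oneD_range (hc : Continuous g) {t : ℝ} (ht : t ∈ Icc (0:ℝ) 1) : g t ∈ Icc (0:ℝ) 1 := by
  have hmono := (oneD_mono hL hbl h0 h1 hc).monotoneOn
  constructor
  · have := hmono (left_mem_Icc.mpr zero_le_one) ht ht.1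
    rwa [h0] at this
  · have := hmono ht (right_mem_Icc.mpr zero_le_one) ht.2
    rwa [h1] at this

end oneD

/-! ### The building blocks of the extension -/

/-- Vertical interpolation map. -/
def Vmap (ψ₀ ψ₁ : ℝ → ℝ) : ℂ → ℂ :=
  fun w => ((w.re : ℂ) + (((1 - w.re) * ψ₀ w.im + w.re * ψ₁ w.im : ℝ) : ℂ) * I)

/-- Horizontal interpolation map. -/
def Hmap (Φ₀ Φ₁ : ℝ → ℝ) : ℂ → ℂ :=
  fun w => ((((1 - w.im) * Φ₀ w.re + w.im * Φ₁ w.re : ℝ) : ℂ) + ((w.im : ℝ) : ℂ) * I)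

@[simp] lemma Vmap_re (ψ₀ ψ₁ : ℝ → ℝ) (w : ℂ) : (Vmap ψ₀ ψ₁ w).re = w.re := by simp [Vmap]
@[simp] lemma Vmap_im (ψ₀ ψ₁ : ℝ → ℝ) (w : ℂ) :
    (Vmap ψ₀ ψ₁ w).im = (1 - w.re) * ψ₀ w.im + w.re * ψ₁ w.im := by simp [Vmap]
@[simp] lemma Hmap_re (Φ₀ Φ₁ : ℝ → ℝ) (w : ℂ) :
    (Hmap Φ₀ Φ₁ w).re = (1 - w.im) * Φ₀ w.re + w.im * Φ₁ w.re := by simp [Hmap]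
@[simp] lemma Hmap_im (Φ₀ Φ₁ : ℝ → ℝ) (w : ℂ) : (Hmap Φ₀ Φ₁ w).im = w.im := by simp [Hmap]

lemma hasFDerivAt_Vmap (ψ₀ ψ₁ : ℝ → ℝ) (z : ℂ) (d₀ d₁ : ℝ)
    (h₀ : HasDerivAt ψ₀ d₀ z.im) (h₁ : HasDerivAt ψ₁ d₁ z.im) :
    HasFDerivAt (Vmap ψ₀ ψ₁)
      (mk2 1 0 (ψ₁ z.im - ψ₀ z.im) ((1 - z.re) * d₀ + z.re * d₁)) z := by
  have hre : HasFDerivAt (fun w : ℂ => w.re) reCLM z := Complex.reCLM.hasFDerivAt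
  have him : HasFDerivAt (fun w : ℂ => w.im) imCLM z := Complex.imCLM.hasFDerivAt
  have hψ₀ : HasFDerivAt (fun w : ℂ => ψ₀ w.im) (d₀ • imCLM) z := h₀.comp_hasFDerivAt z him
  have hψ₁ : HasFDerivAt (fun w : ℂ => ψ₁ w.im) (d₁ • imCLM) z := h₁.comp_hasFDerivAt z him
  have hg : HasFDerivAt (fun w : ℂ => (1 - w.re) * ψ₀ w.im + w.re * ψ₁ w.im)
      (((1 - z.re) • (d₀ • imCLM) + ψ₀ z.im • ((0 : ℂ →L[ℝ] ℝ) - reCLM)) +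
        (z.re • (d₁ • imCLM) + ψ₁ z.im • reCLM)) z :=
    ((((hasFDerivAt_const (1:ℝ) z).sub hre)).mul hψ₀).add (hre.mul hψ₁)
  have hmain := (Complex.ofRealCLM.hasFDerivAt.comp z hre).add
    (((Complex.ofRealCLM.hasFDerivAt.comp z hg)).mul_const I)
  have heq : Complex.ofRealCLM.comp reCLM +
      I • (Complex.ofRealCLM.comp (((1 - z.re) • (d₀ • imCLM) + ψ₀ z.im • ((0 : ℂ →L[ℝ] ℝ) - reCLM)) +
        (z.re • (d₁ • imCLM) + ψ₁ z.im • reCLM))) =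
      mk2 1 0 (ψ₁ z.im - ψ₀ z.im) ((1 - z.re) * d₀ + z.re * d₁) := by
    refine ContinuousLinearMap.ext fun w => ?_
    apply Complex.ext <;> simp [Complex.real_smul] <;> ring
  rw [heq] at hmain
  exact hmain

lemma hasFDerivAt_Hmap (Φ₀ Φ₁ : ℝ → ℝ) (z : ℂ) (c₀ c₁ : ℝ)
    (h₀ : HasDerivAt Φ₀ c₀ z.re) (h₁ : HasDerivAt Φ₁ c₁ z.re) :
    HasFDerivAt (Hmap Φ₀ Φ₁)
      (mk2 ((1 - z.im) * c₀ + z.im * c₁) (Φ₁ z.re - Φ₀ z.re) 0 1) z := by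
  have hre : HasFDerivAt (fun w : ℂ => w.re) reCLM z := Complex.reCLM.hasFDerivAt
  have him : HasFDerivAt (fun w : ℂ => w.im) imCLM z := Complex.imCLM.hasFDerivAt
  have hΦ₀ : HasFDerivAt (fun w : ℂ => Φ₀ w.re) (c₀ • reCLM) z := h₀.comp_hasFDerivAt z hre
  have hΦ₁ : HasFDerivAt (fun w : ℂ => Φ₁ w.re) (c₁ • reCLM) z := h₁.comp_hasFDerivAt z hre
  have hg : HasFDerivAt (fun w : ℂ => (1 - w.im) * Φ₀ w.re + w.im * Φ₁ w.re)
      (((1 - z.im) • (c₀ • reCLM) + Φ₀ z.re • ((0 : ℂ →L[ℝ] ℝ) - imCLM)) +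
        (z.im • (c₁ • reCLM) + Φ₁ z.re • imCLM)) z :=
    ((((hasFDerivAt_const (1:ℝ) z).sub him)).mul hΦ₀).add (him.mul hΦ₁)
  have hmain := (Complex.ofRealCLM.hasFDerivAt.comp z hg).add
    (((Complex.ofRealCLM.hasFDerivAt.comp z him)).mul_const I)
  have heq : Complex.ofRealCLM.comp (((1 - z.im) • (c₀ • reCLM) + Φ₀ z.re • ((0 : ℂ →L[ℝ] ℝ) - imCLM)) +
        (z.im • (c₁ • reCLM) + Φ₁ z.re • imCLM)) + I • (Complex.ofRealCLM.comp imCLM) =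
      mk2 ((1 - z.im) * c₀ + z.im * c₁) (Φ₁ z.re - Φ₀ z.re) 0 1 := by
    refine ContinuousLinearMap.ext fun w => ?_
    apply Complex.ext <;> simp [Complex.real_smul] <;> ring
  rw [heq] at hmain
  exact hmain

/-! ### Convex combination lemmas -/

lemma convexCombo_mem {x s t lo hi : ℝ} (hx : x ∈ Icc (0:ℝ) 1) (hs : s ∈ Icc lo hi)
    (ht : t ∈ Icc lo hi) : (1-x)*s + x*t ∈ Icc lo hi := by
  obtain ⟨hx0, hx1⟩ := hx
  constructor <;> nlinarith [hs.1, hs.2, ht.1, ht.2]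

lemma convexCombo_lt {x s s' t t' : ℝ} (hx : x ∈ Icc (0:ℝ) 1) (hs : s < s') (ht : t < t') :
    (1-x)*s + x*t < (1-x)*s' + x*t' := by
  obtain ⟨hx0, hx1⟩ := hx
  rcases le_or_gt x (1/2) with hxh | hxh
  · nlinarith
  · nlinarith

/-! ### Bijectivity of the building blocks -/

lemma mem_rectC {w h : ℝ} {z : ℂ} : z ∈ rectC w h ↔ z.re ∈ Icc 0 w ∧ z.im ∈ Icc 0 h := Iff.rfl

lemma bijOn_Vmap {ψ₀ ψ₁ : ℝ → ℝ}
    (hc₀ : Continuous ψ₀) (hc₁ : Continuous ψ₁)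
    (hm₀ : StrictMonoOn ψ₀ (Icc 0 1)) (hm₁ : StrictMonoOn ψ₁ (Icc 0 1))
    (e00 : ψ₀ 0 = 0) (e01 : ψ₀ 1 = 1) (e10 : ψ₁ 0 = 0) (e11 : ψ₁ 1 = 1) :
    BijOn (Vmap ψ₀ ψ₁) (rectC 1 1) (rectC 1 1) := by
  have hr₀ : ∀ t ∈ Icc (0:ℝ) 1, ψ₀ t ∈ Icc (0:ℝ) 1 := fun t ht =>
    ⟨e00 ▸ hm₀.monotoneOn (left_mem_Icc.mpr zero_le_one) ht ht.1,
     e01 ▸ hm₀.monotoneOn ht (right_mem_Icc.mpr zero_le_one) ht.2⟩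
  have hr₁ : ∀ t ∈ Icc (0:ℝ) 1, ψ₁ t ∈ Icc (0:ℝ) 1 := fun t ht =>
    ⟨e10 ▸ hm₁.monotoneOn (left_mem_Icc.mpr zero_le_one) ht ht.1,
     e11 ▸ hm₁.monotoneOn ht (right_mem_Icc.mpr zero_le_one) ht.2⟩
  refine ⟨?_, ?_, ?_⟩
  · intro z hz
    obtain ⟨hz1, hz2⟩ := mem_rectC.1 hz
    exact mem_rectC.2 ⟨by simpa using hz1,
      by rw [Vmap_im]; exact convexCombo_mem hz1 (hr₀ _ hz2) (hr₁ _ hz2)⟩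
  · intro z hz w hw heq
    obtain ⟨hz1, hz2⟩ := mem_rectC.1 hz
    obtain ⟨hw1, hw2⟩ := mem_rectC.1 hw
    have hre : z.re = w.re := by
      have := congrArg Complex.re heq; simpa using this
    have him : (1 - z.re) * ψ₀ z.im + z.re * ψ₁ z.im
        = (1 - w.re) * ψ₀ w.im + w.re * ψ₁ w.im := by
      have := congrArg Complex.im heq; simpa using this
    rw [← hre] at him
    have : z.im = w.im := by
      rcases lt_trichotomy z.im w.im with hlt | heq2 | hgt
      · exact absurd him (ne_of_lt (convexCombo_lt hz1 (hm₀ hz2 hw2 hlt) (hm₁ hz2 hw2 hlt)))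
      · exact heq2
      · exact absurd him.symm (ne_of_lt (convexCombo_lt hz1 (hm₀ hw2 hz2 hgt) (hm₁ hw2 hz2 hgt)))
    exact Complex.ext hre this
  · intro w hw
    obtain ⟨hw1, hw2⟩ := mem_rectC.1 hw
    set x := w.re with hx
    have hν : Continuous fun y => (1-x)*ψ₀ y + x*ψ₁ y := by
      exact ((continuous_const.mul hc₀).add (continuous_const.mul hc₁))
    have hIVT := intermediate_value_Icc (zero_le_one (α := ℝ)) hν.continuousOn
    have h00 : (1-x)*ψ₀ 0 + x*ψ₁ 0 = 0 := by rw [e00, e10]; ring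
    have h11 : (1-x)*ψ₀ 1 + x*ψ₁ 1 = 1 := by rw [e01, e11]; ring
    rw [h00, h11] at hIVT
    obtain ⟨y, hy, hνy⟩ := hIVT hw2
    refine ⟨⟨x, y⟩, mem_rectC.2 ⟨hw1, hy⟩, Complex.ext (by simp [hx]) ?_⟩
    rw [Vmap_im]
    exact hνy

lemma bijOn_Hmap {Φ₀ Φ₁ : ℝ → ℝ}
    (hc₀ : Continuous Φ₀) (hc₁ : Continuous Φ₁)
    (hm₀ : StrictMonoOn Φ₀ (Icc 0 1)) (hm₁ : StrictMonoOn Φ₁ (Icc 0 1))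
    (e00 : Φ₀ 0 = 0) (e01 : Φ₀ 1 = 1) (e10 : Φ₁ 0 = 0) (e11 : Φ₁ 1 = 1) :
    BijOn (Hmap Φ₀ Φ₁) (rectC 1 1) (rectC 1 1) := by
  have hr₀ : ∀ t ∈ Icc (0:ℝ) 1, Φ₀ t ∈ Icc (0:ℝ) 1 := fun t ht =>
    ⟨e00 ▸ hm₀.monotoneOn (left_mem_Icc.mpr zero_le_one) ht ht.1,
     e01 ▸ hm₀.monotoneOn ht (right_mem_Icc.mpr zero_le_one) ht.2⟩
  have hr₁ : ∀ t ∈ Icc (0:ℝ) 1, Φ₁ t ∈ Icc (0:ℝ) 1 := fun t ht =>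
    ⟨e10 ▸ hm₁.monotoneOn (left_mem_Icc.mpr zero_le_one) ht ht.1,
     e11 ▸ hm₁.monotoneOn ht (right_mem_Icc.mpr zero_le_one) ht.2⟩
  refine ⟨?_, ?_, ?_⟩
  · intro z hz
    obtain ⟨hz1, hz2⟩ := mem_rectC.1 hz
    exact mem_rectC.2 ⟨by rw [Hmap_re]; exact convexCombo_mem hz2 (hr₀ _ hz1) (hr₁ _ hz1),
      by simpa using hz2⟩
  · intro z hz w hw heq
    obtain ⟨hz1, hz2⟩ := mem_rectC.1 hz
    obtain ⟨hw1, hw2⟩ := mem_rectC.1 hw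
    have him : z.im = w.im := by
      have := congrArg Complex.im heq; simpa using this
    have hre : (1 - z.im) * Φ₀ z.re + z.im * Φ₁ z.re
        = (1 - w.im) * Φ₀ w.re + w.im * Φ₁ w.re := by
      have := congrArg Complex.re heq; simpa using this
    rw [← him] at hre
    have : z.re = w.re := by
      rcases lt_trichotomy z.re w.re with hlt | heq2 | hgt
      · exact absurd hre (ne_of_lt (convexCombo_lt hz2 (hm₀ hz1 hw1 hlt) (hm₁ hz1 hw1 hlt)))
      · exact heq2
      · exact absurd hre.symm (ne_of_lt (convexCombo_lt hz2 (hm₀ hw1 hz1 hgt) (hm₁ hw1 hz1 hgt)))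
    exact Complex.ext this him
  · intro w hw
    obtain ⟨hw1, hw2⟩ := mem_rectC.1 hw
    set y := w.im with hy
    have hν : Continuous fun s => (1-y)*Φ₀ s + y*Φ₁ s := by
      exact ((continuous_const.mul hc₀).add (continuous_const.mul hc₁))
    have hIVT := intermediate_value_Icc (zero_le_one (α := ℝ)) hν.continuousOn
    have h00 : (1-y)*Φ₀ 0 + y*Φ₁ 0 = 0 := by rw [e00, e10]; ring
    have h11 : (1-y)*Φ₀ 1 + y*Φ₁ 1 = 1 := by rw [e01, e11]; ring
    rw [h00, h11] at hIVT
    obtain ⟨s, hs, hνs⟩ := hIVT hw1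
    refine ⟨⟨s, y⟩, mem_rectC.2 ⟨hs, hw2⟩, Complex.ext ?_ (by simp [hy])⟩
    rw [Hmap_re]
    exact hνs

lemma bijOn_Amap {a h : ℝ} (ha : 0 < a) (hh : 0 < h) :
    BijOn (fun w => mk2 a 0 0 h w) (rectC 1 1) (rectC a h) := by
  refine ⟨?_, ?_, ?_⟩
  · intro z hz
    obtain ⟨hz1, hz2⟩ := mem_rectC.1 hz
    refine mem_rectC.2 ⟨?_, ?_⟩
    · rw [mk2_re]; constructor
      · nlinarith [hz1.1]
      · nlinarith [hz1.2]
    · rw [mk2_im]; constructor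
      · nlinarith [hz2.1]
      · nlinarith [hz2.2]
  · intro z _ w _ heq
    have h1 := congrArg Complex.re heq
    have h2 := congrArg Complex.im heq
    simp only [mk2_re, mk2_im] at h1 h2
    apply Complex.ext
    · have : a * z.re = a * w.re := by linarith
      exact mul_left_cancel₀ (ne_of_gt ha) this
    · have : h * z.im = h * w.im := by linarith
      exact mul_left_cancel₀ (ne_of_gt hh) this
  · intro w hw
    obtain ⟨hw1, hw2⟩ := mem_rectC.1 hw
    refine ⟨⟨w.re / a, w.im / h⟩, mem_rectC.2 ⟨?_, ?_⟩, ?_⟩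
    · exact ⟨div_nonneg hw1.1 ha.le, (div_le_one ha).mpr hw1.2⟩
    · exact ⟨div_nonneg hw2.1 hh.le, (div_le_one hh).mpr hw2.2⟩
    · apply Complex.ext
      · rw [show ((fun w => (mk2 a 0 0 h) w) (⟨w.re / a, w.im / h⟩ : ℂ)).re
            = a * (w.re / a) + 0 * (w.im / h) from mk2_re ..]
        field_simp; ring
      · rw [show ((fun w => (mk2 a 0 0 h) w) (⟨w.re / a, w.im / h⟩ : ℂ)).im
            = 0 * (w.re / a) + h * (w.im / h) from mk2_im ..]
        field_simp; ring

/-! ### Null sets from real coordinates -/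

lemma null_re {A : Set ℝ} (hA : volume A = 0) : volume {z : ℂ | z.re ∈ A} = 0 := by
  obtain ⟨B, hAB, hBm, hB0⟩ := exists_measurable_superset_of_null hA
  have hsub : {z : ℂ | z.re ∈ A} ⊆ {z : ℂ | z.re ∈ B} := fun z hz => hAB hz
  refine measure_mono_null hsub ?_
  have h1 : {z : ℂ | z.re ∈ B} = Complex.measurableEquivRealProd ⁻¹' (B ×ˢ univ) := by
    ext z; simp [Complex.measurableEquivRealProd, Complex.equivRealProd]
  rw [h1, MeasurePreserving.measure_preimage Complex.volume_preserving_equiv_real_prod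
    (hBm.prod MeasurableSet.univ).nullMeasurableSet, Measure.volume_eq_prod,
    Measure.prod_prod, hB0, zero_mul]

lemma null_im {A : Set ℝ} (hA : volume A = 0) : volume {z : ℂ | z.im ∈ A} = 0 := by
  obtain ⟨B, hAB, hBm, hB0⟩ := exists_measurable_superset_of_null hA
  have hsub : {z : ℂ | z.im ∈ A} ⊆ {z : ℂ | z.im ∈ B} := fun z hz => hAB hz
  refine measure_mono_null hsub ?_
  have h1 : {z : ℂ | z.im ∈ B} = Complex.measurableEquivRealProd ⁻¹' (univ ×ˢ B) := by
    ext z; simp [Complex.measurableEquivRealProd, Complex.equivRealProd]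
  rw [h1, MeasurePreserving.measure_preimage Complex.volume_preserving_equiv_real_prod
    (MeasurableSet.univ.prod hBm).nullMeasurableSet, Measure.volume_eq_prod,
    Measure.prod_prod, hB0, mul_zero]

lemma measurable_rectC (w h : ℝ) : MeasurableSet (rectC w h) := by
  have : rectC w h = Complex.re ⁻¹' Icc 0 w ∩ Complex.im ⁻¹' Icc 0 h := rfl
  rw [this]
  exact (measurableSet_Icc.preimage Complex.measurable_re).inter
    (measurableSet_Icc.preimage Complex.measurable_im)
set_option maxHeartbeats 2000000 in
/-- **Lemma 9.1 (a version of Tukia's lemma).**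
Let `S = [0,1]²`, `R = [0,a] × [0,a^(p-1)]` with `a ≥ 1`, `1 < p < 2`.  Given an
orientation-preserving `L`-bilipschitz homeomorphism `f : (∂S, ‖·‖_{a,p}) → (∂R, |·|)` mapping
the edges of `S` to the corresponding edges of `R`, there is a homeomorphic extension
`F : S → R` of `f` with `(1/C(L,p)) J_F ≤ |DF|^p ≤ C(L,p) J_F` almost everywhere, where
`C(L,p)` depends only on `L` and `p`. -/
theorem tukia_lemma (p L : ℝ) (hp : 1 < p) (hp' : p < 2) (hL : 1 ≤ L) :
    ∃ C : ℝ, 0 < C ∧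
      ∀ a : ℝ, 1 ≤ a →
      ∀ f : ℂ → ℂ,
        Set.BijOn f (bdryC 1 1) (bdryC a (a ^ (p - 1))) →
        f '' bottomE 1 1 = bottomE a (a ^ (p - 1)) →
        f '' topE 1 1 = topE a (a ^ (p - 1)) →
        f '' leftE 1 1 = leftE a (a ^ (p - 1)) →
        f '' rightE 1 1 = rightE a (a ^ (p - 1)) →
        (∀ x ∈ bdryC 1 1, ∀ y ∈ bdryC 1 1,
          (1 / L) * dap a p x y ≤ dist (f x) (f y) ∧
          dist (f x) (f y) ≤ L * dap a p x y) →
        ∃ F : ℂ → ℂ,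
          ContinuousOn F (rectC 1 1) ∧
          Set.BijOn F (rectC 1 1) (rectC a (a ^ (p - 1))) ∧
          (∀ z ∈ bdryC 1 1, F z = f z) ∧
          (∀ᵐ z ∂(volume.restrict (rectC 1 1)),
            DifferentiableAt ℝ F z ∧
            (1 / C) * |(fderiv ℝ F z).det| ≤ ‖fderiv ℝ F z‖ ^ p ∧
            ‖fderiv ℝ F z‖ ^ p ≤ C * |(fderiv ℝ F z).det|) := by
  have hp0 : (0:ℝ) ≤ p := by linarith
  have hp2 : p ≤ 2 := le_of_lt hp'
  have hL0 : (0:ℝ) < L := lt_of_lt_of_le zero_lt_one hL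
  refine ⟨25 * L^8, by positivity, ?_⟩
  intro a ha f hbij hbot htop hleft hright hf
  clear hbij
  have ha0 : (0:ℝ) < a := lt_of_lt_of_le zero_lt_one ha
  have hh0 : (0:ℝ) < a ^ (p - 1) := Real.rpow_pos_of_pos ha0 _
  have hh1 : (1:ℝ) ≤ a ^ (p - 1) := by
    have := Real.rpow_le_rpow_of_exponent_le ha (show (0:ℝ) ≤ p - 1 by linarith)
    rwa [Real.rpow_zero] at this
  have hha : a ^ (p - 1) ≤ a := by
    have := Real.rpow_le_rpow_of_exponent_le ha (show p - 1 ≤ (1:ℝ) by linarith)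
    rwa [Real.rpow_one] at this
  have hap : a * a ^ (p - 1) = a ^ p := by
    have hps : a ^ p = a ^ (1 + (p - 1)) := congrArg (a ^ ·) (by ring)
    rw [hps, Real.rpow_add ha0, Real.rpow_one]
  set h := a ^ (p - 1) with hhdef
  clear_value h
  -- corner values
  have hmem00b : (⟨0,0⟩:ℂ) ∈ bottomE 1 1 := ⟨rfl, by norm_num⟩
  have hmem00l : (⟨0,0⟩:ℂ) ∈ leftE 1 1 := ⟨rfl, by norm_num⟩
  have hmem10b : (⟨1,0⟩:ℂ) ∈ bottomE 1 1 := ⟨rfl, by norm_num⟩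
  have hmem10r : (⟨1,0⟩:ℂ) ∈ rightE 1 1 := ⟨rfl, by norm_num⟩
  have hmem01t : (⟨0,1⟩:ℂ) ∈ topE 1 1 := ⟨rfl, by norm_num⟩
  have hmem01l : (⟨0,1⟩:ℂ) ∈ leftE 1 1 := ⟨rfl, by norm_num⟩
  have hmem11t : (⟨1,1⟩:ℂ) ∈ topE 1 1 := ⟨rfl, by norm_num⟩
  have hmem11r : (⟨1,1⟩:ℂ) ∈ rightE 1 1 := ⟨rfl, by norm_num⟩
  have him00 : (f ⟨0,0⟩).im = 0 :=
    (show f ⟨0,0⟩ ∈ bottomE a h by rw [← hbot]; exact mem_image_of_mem f hmem00b).1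
  have hre00 : (f ⟨0,0⟩).re = 0 :=
    (show f ⟨0,0⟩ ∈ leftE a h by rw [← hleft]; exact mem_image_of_mem f hmem00l).1
  have him10 : (f ⟨1,0⟩).im = 0 :=
    (show f ⟨1,0⟩ ∈ bottomE a h by rw [← hbot]; exact mem_image_of_mem f hmem10b).1
  have hre10 : (f ⟨1,0⟩).re = a :=
    (show f ⟨1,0⟩ ∈ rightE a h by rw [← hright]; exact mem_image_of_mem f hmem10r).1
  have him01 : (f ⟨0,1⟩).im = h :=
    (show f ⟨0,1⟩ ∈ topE a h by rw [← htop]; exact mem_image_of_mem f hmem01t).1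
  have hre01 : (f ⟨0,1⟩).re = 0 :=
    (show f ⟨0,1⟩ ∈ leftE a h by rw [← hleft]; exact mem_image_of_mem f hmem01l).1
  have him11 : (f ⟨1,1⟩).im = h :=
    (show f ⟨1,1⟩ ∈ topE a h by rw [← htop]; exact mem_image_of_mem f hmem11t).1
  have hre11 : (f ⟨1,1⟩).re = a :=
    (show f ⟨1,1⟩ ∈ rightE a h by rw [← hright]; exact mem_image_of_mem f hmem11r).1
  -- the four edge functions
  set ψ₀ : ℝ → ℝ := fun t => (f ⟨0, clmp t⟩).im / h with hψ₀def
  set ψ₁ : ℝ → ℝ := fun t => (f ⟨1, clmp t⟩).im / h with hψ₁def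
  set Φ₀ : ℝ → ℝ := fun t => (f ⟨clmp t, 0⟩).re / a with hΦ₀def
  set Φ₁ : ℝ → ℝ := fun t => (f ⟨clmp t, 1⟩).re / a with hΦ₁def
  have hgψ₀ : ∀ t, ψ₀ t = ψ₀ (clmp t) := fun t => by simp only [hψ₀def, clmp_idem]
  have hgψ₁ : ∀ t, ψ₁ t = ψ₁ (clmp t) := fun t => by simp only [hψ₁def, clmp_idem]
  have hgΦ₀ : ∀ t, Φ₀ t = Φ₀ (clmp t) := fun t => by simp only [hΦ₀def, clmp_idem]
  have hgΦ₁ : ∀ t, Φ₁ t = Φ₁ (clmp t) := fun t => by simp only [hΦ₁def, clmp_idem]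
  clear_value ψ₀ ψ₁ Φ₀ Φ₁
  -- endpoint values
  have eψ₀0 : ψ₀ 0 = 0 := by
    simp only [hψ₀def]; rw [clmp_eq (by norm_num : (0:ℝ) ∈ Icc (0:ℝ) 1), him00, zero_div]
  have eψ₀1 : ψ₀ 1 = 1 := by
    simp only [hψ₀def]; rw [clmp_eq (by norm_num : (1:ℝ) ∈ Icc (0:ℝ) 1), him01,
      div_self hh0.ne']
  have eψ₁0 : ψ₁ 0 = 0 := by
    simp only [hψ₁def]; rw [clmp_eq (by norm_num : (0:ℝ) ∈ Icc (0:ℝ) 1), him10, zero_div]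
  have eψ₁1 : ψ₁ 1 = 1 := by
    simp only [hψ₁def]; rw [clmp_eq (by norm_num : (1:ℝ) ∈ Icc (0:ℝ) 1), him11,
      div_self hh0.ne']
  have eΦ₀0 : Φ₀ 0 = 0 := by
    simp only [hΦ₀def]; rw [clmp_eq (by norm_num : (0:ℝ) ∈ Icc (0:ℝ) 1), hre00, zero_div]
  have eΦ₀1 : Φ₀ 1 = 1 := by
    simp only [hΦ₀def]; rw [clmp_eq (by norm_num : (1:ℝ) ∈ Icc (0:ℝ) 1), hre10,
      div_self ha0.ne']
  have eΦ₁0 : Φ₁ 0 = 0 := by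
    simp only [hΦ₁def]; rw [clmp_eq (by norm_num : (0:ℝ) ∈ Icc (0:ℝ) 1), hre01, zero_div]
  have eΦ₁1 : Φ₁ 1 = 1 := by
    simp only [hΦ₁def]; rw [clmp_eq (by norm_num : (1:ℝ) ∈ Icc (0:ℝ) 1), hre11,
      div_self ha0.ne']
  -- bilipschitz bounds on the edge functions
  have hblψ₀ : ∀ s ∈ Icc (0:ℝ) 1, ∀ t ∈ Icc (0:ℝ) 1,
      (1/L) * |s - t| ≤ |ψ₀ s - ψ₀ t| ∧ |ψ₀ s - ψ₀ t| ≤ L * |s - t| := by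
    intro s hs t ht
    have hPm : (⟨0, s⟩:ℂ) ∈ leftE 1 1 := ⟨rfl, hs⟩
    have hQm : (⟨0, t⟩:ℂ) ∈ leftE 1 1 := ⟨rfl, ht⟩
    have hfP : f ⟨0,s⟩ ∈ leftE a h := by rw [← hleft]; exact mem_image_of_mem f hPm
    have hfQ : f ⟨0,t⟩ ∈ leftE a h := by rw [← hleft]; exact mem_image_of_mem f hQm
    have hd := hf _ (leftE_subset_bdryC 1 1 hPm) _ (leftE_subset_bdryC 1 1 hQm)
    have hdap : dap a p ⟨0,s⟩ ⟨0,t⟩ = h * |s - t| := by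
      rw [hhdef]
      show max (a * |(0:ℝ) - 0|) (a ^ (p-1) * |s - t|) = a ^ (p-1) * |s - t|
      rw [sub_self, abs_zero, mul_zero]
      exact max_eq_right (by positivity)
    have hdist : dist (f ⟨0,s⟩) (f ⟨0,t⟩) = |(f ⟨0,s⟩).im - (f ⟨0,t⟩).im| := by
      rw [Complex.dist_of_re_eq (by rw [hfP.1, hfQ.1]), Real.dist_eq]
    rw [hdap, hdist] at hd
    have hvals : ψ₀ s - ψ₀ t = ((f ⟨0,s⟩).im - (f ⟨0,t⟩).im)/h := by
      simp only [hψ₀def]; rw [clmp_eq hs, clmp_eq ht]; ring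
    rw [hvals, abs_div, abs_of_pos hh0]
    constructor
    · rw [le_div_iff₀ hh0]
      calc (1/L) * |s - t| * h = (1/L) * (h * |s - t|) := by ring
      _ ≤ _ := hd.1
    · rw [div_le_iff₀ hh0]
      calc |(f ⟨0,s⟩).im - (f ⟨0,t⟩).im| ≤ L * (h * |s - t|) := hd.2
      _ = L * |s - t| * h := by ring
  have hblψ₁ : ∀ s ∈ Icc (0:ℝ) 1, ∀ t ∈ Icc (0:ℝ) 1,
      (1/L) * |s - t| ≤ |ψ₁ s - ψ₁ t| ∧ |ψ₁ s - ψ₁ t| ≤ L * |s - t| := by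
    intro s hs t ht
    have hPm : (⟨1, s⟩:ℂ) ∈ rightE 1 1 := ⟨rfl, hs⟩
    have hQm : (⟨1, t⟩:ℂ) ∈ rightE 1 1 := ⟨rfl, ht⟩
    have hfP : f ⟨1,s⟩ ∈ rightE a h := by rw [← hright]; exact mem_image_of_mem f hPm
    have hfQ : f ⟨1,t⟩ ∈ rightE a h := by rw [← hright]; exact mem_image_of_mem f hQm
    have hd := hf _ (rightE_subset_bdryC 1 1 hPm) _ (rightE_subset_bdryC 1 1 hQm)
    have hdap : dap a p ⟨1,s⟩ ⟨1,t⟩ = h * |s - t| := by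
      rw [hhdef]
      show max (a * |(1:ℝ) - 1|) (a ^ (p-1) * |s - t|) = a ^ (p-1) * |s - t|
      rw [sub_self, abs_zero, mul_zero]
      exact max_eq_right (by positivity)
    have hdist : dist (f ⟨1,s⟩) (f ⟨1,t⟩) = |(f ⟨1,s⟩).im - (f ⟨1,t⟩).im| := by
      rw [Complex.dist_of_re_eq (by rw [hfP.1, hfQ.1]), Real.dist_eq]
    rw [hdap, hdist] at hd
    have hvals : ψ₁ s - ψ₁ t = ((f ⟨1,s⟩).im - (f ⟨1,t⟩).im)/h := by
      simp only [hψ₁def]; rw [clmp_eq hs, clmp_eq ht]; ring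
    rw [hvals, abs_div, abs_of_pos hh0]
    constructor
    · rw [le_div_iff₀ hh0]
      calc (1/L) * |s - t| * h = (1/L) * (h * |s - t|) := by ring
      _ ≤ _ := hd.1
    · rw [div_le_iff₀ hh0]
      calc |(f ⟨1,s⟩).im - (f ⟨1,t⟩).im| ≤ L * (h * |s - t|) := hd.2
      _ = L * |s - t| * h := by ring
  have hblΦ₀ : ∀ s ∈ Icc (0:ℝ) 1, ∀ t ∈ Icc (0:ℝ) 1,
      (1/L) * |s - t| ≤ |Φ₀ s - Φ₀ t| ∧ |Φ₀ s - Φ₀ t| ≤ L * |s - t| := by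
    intro s hs t ht
    have hPm : (⟨s, 0⟩:ℂ) ∈ bottomE 1 1 := ⟨rfl, hs⟩
    have hQm : (⟨t, 0⟩:ℂ) ∈ bottomE 1 1 := ⟨rfl, ht⟩
    have hfP : f ⟨s,0⟩ ∈ bottomE a h := by rw [← hbot]; exact mem_image_of_mem f hPm
    have hfQ : f ⟨t,0⟩ ∈ bottomE a h := by rw [← hbot]; exact mem_image_of_mem f hQm
    have hd := hf _ (bottomE_subset_bdryC 1 1 hPm) _ (bottomE_subset_bdryC 1 1 hQm)
    have hdap : dap a p ⟨s,0⟩ ⟨t,0⟩ = a * |s - t| := by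
      show max (a * |s - t|) (a ^ (p-1) * |(0:ℝ) - 0|) = a * |s - t|
      rw [sub_self, abs_zero, mul_zero]
      exact max_eq_left (by positivity)
    have hdist : dist (f ⟨s,0⟩) (f ⟨t,0⟩) = |(f ⟨s,0⟩).re - (f ⟨t,0⟩).re| := by
      rw [Complex.dist_of_im_eq (by rw [hfP.1, hfQ.1]), Real.dist_eq]
    rw [hdap, hdist] at hd
    have hvals : Φ₀ s - Φ₀ t = ((f ⟨s,0⟩).re - (f ⟨t,0⟩).re)/a := by
      simp only [hΦ₀def]; rw [clmp_eq hs, clmp_eq ht]; ring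
    rw [hvals, abs_div, abs_of_pos ha0]
    constructor
    · rw [le_div_iff₀ ha0]
      calc (1/L) * |s - t| * a = (1/L) * (a * |s - t|) := by ring
      _ ≤ _ := hd.1
    · rw [div_le_iff₀ ha0]
      calc |(f ⟨s,0⟩).re - (f ⟨t,0⟩).re| ≤ L * (a * |s - t|) := hd.2
      _ = L * |s - t| * a := by ring
  have hblΦ₁ : ∀ s ∈ Icc (0:ℝ) 1, ∀ t ∈ Icc (0:ℝ) 1,
      (1/L) * |s - t| ≤ |Φ₁ s - Φ₁ t| ∧ |Φ₁ s - Φ₁ t| ≤ L * |s - t| := by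
    intro s hs t ht
    have hPm : (⟨s, 1⟩:ℂ) ∈ topE 1 1 := ⟨rfl, hs⟩
    have hQm : (⟨t, 1⟩:ℂ) ∈ topE 1 1 := ⟨rfl, ht⟩
    have hfP : f ⟨s,1⟩ ∈ topE a h := by rw [← htop]; exact mem_image_of_mem f hPm
    have hfQ : f ⟨t,1⟩ ∈ topE a h := by rw [← htop]; exact mem_image_of_mem f hQm
    have hd := hf _ (topE_subset_bdryC 1 1 hPm) _ (topE_subset_bdryC 1 1 hQm)
    have hdap : dap a p ⟨s,1⟩ ⟨t,1⟩ = a * |s - t| := by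
      show max (a * |s - t|) (a ^ (p-1) * |(1:ℝ) - 1|) = a * |s - t|
      rw [sub_self, abs_zero, mul_zero]
      exact max_eq_left (by positivity)
    have hdist : dist (f ⟨s,1⟩) (f ⟨t,1⟩) = |(f ⟨s,1⟩).re - (f ⟨t,1⟩).re| := by
      rw [Complex.dist_of_im_eq (by rw [hfP.1, hfQ.1]), Real.dist_eq]
    rw [hdap, hdist] at hd
    have hvals : Φ₁ s - Φ₁ t = ((f ⟨s,1⟩).re - (f ⟨t,1⟩).re)/a := by
      simp only [hΦ₁def]; rw [clmp_eq hs, clmp_eq ht]; ring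
    rw [hvals, abs_div, abs_of_pos ha0]
    constructor
    · rw [le_div_iff₀ ha0]
      calc (1/L) * |s - t| * a = (1/L) * (a * |s - t|) := by ring
      _ ≤ _ := hd.1
    · rw [div_le_iff₀ ha0]
      calc |(f ⟨s,1⟩).re - (f ⟨t,1⟩).re| ≤ L * (a * |s - t|) := hd.2
      _ = L * |s - t| * a := by ring
  -- continuity, monotonicity, almost-everywhere differentiability
  have hcψ₀ : Continuous ψ₀ := (oneD_lip hL hgψ₀ hblψ₀).continuous
  have hcψ₁ : Continuous ψ₁ := (oneD_lip hL hgψ₁ hblψ₁).continuous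
  have hcΦ₀ : Continuous Φ₀ := (oneD_lip hL hgΦ₀ hblΦ₀).continuous
  have hcΦ₁ : Continuous Φ₁ := (oneD_lip hL hgΦ₁ hblΦ₁).continuous
  have hmψ₀ := oneD_mono hL hblψ₀ eψ₀0 eψ₀1 hcψ₀
  have hmψ₁ := oneD_mono hL hblψ₁ eψ₁0 eψ₁1 hcψ₁
  have hmΦ₀ := oneD_mono hL hblΦ₀ eΦ₀0 eΦ₀1 hcΦ₀
  have hmΦ₁ := oneD_mono hL hblΦ₁ eΦ₁0 eΦ₁1 hcΦ₁
  have hbijV := bijOn_Vmap hcψ₀ hcψ₁ hmψ₀ hmψ₁ eψ₀0 eψ₀1 eψ₁0 eψ₁1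
  have hbijH := bijOn_Hmap hcΦ₀ hcΦ₁ hmΦ₀ hmΦ₁ eΦ₀0 eΦ₀1 eΦ₁0 eΦ₁1
  refine ⟨fun z => mk2 a 0 0 h (Hmap Φ₀ Φ₁ (Vmap ψ₀ ψ₁ z)), ?_, ?_, ?_, ?_⟩
  · -- continuity
    have hcV : Continuous (Vmap ψ₀ ψ₁) := by
      apply Continuous.add
      · exact Complex.continuous_ofReal.comp Complex.continuous_re
      · exact (Complex.continuous_ofReal.comp
          (((continuous_const.sub Complex.continuous_re).mul
            (hcψ₀.comp Complex.continuous_im)).add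
            (Complex.continuous_re.mul (hcψ₁.comp Complex.continuous_im)))).mul continuous_const
    have hcH : Continuous (Hmap Φ₀ Φ₁) := by
      apply Continuous.add
      · exact Complex.continuous_ofReal.comp
          (((continuous_const.sub Complex.continuous_im).mul
            (hcΦ₀.comp Complex.continuous_re)).add
            (Complex.continuous_im.mul (hcΦ₁.comp Complex.continuous_re)))
      · exact (Complex.continuous_ofReal.comp Complex.continuous_im).mul continuous_const
    exact ((mk2 a 0 0 h).continuous.comp (hcH.comp hcV)).continuousOn
  · -- bijectivity
    exact (bijOn_Amap ha0 hh0).comp (hbijH.comp hbijV)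
  · -- agreement with f on the boundary
    intro z hz
    show mk2 a 0 0 h (Hmap Φ₀ Φ₁ (Vmap ψ₀ ψ₁ z)) = f z
    rcases hz with ((hb | ht) | hl) | hr
    · -- bottom edge
      have hzeq : (⟨z.re, 0⟩:ℂ) = z := Complex.ext rfl hb.1.symm
      have hfz : f z ∈ bottomE a h := by rw [← hbot]; exact mem_image_of_mem f hb
      have hV : Vmap ψ₀ ψ₁ z = ⟨z.re, 0⟩ := by
        apply Complex.ext
        · simp
        · rw [Vmap_im, hb.1, eψ₀0, eψ₁0]; simp
      have hH : Hmap Φ₀ Φ₁ (⟨z.re, 0⟩:ℂ) = ⟨(f z).re / a, 0⟩ := by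
        apply Complex.ext
        · rw [Hmap_re]
          show (1 - 0) * Φ₀ z.re + 0 * Φ₁ z.re = (f z).re / a
          rw [hΦ₀def]
          show (1 - 0) * ((f ⟨clmp z.re, 0⟩).re / a) + 0 * Φ₁ z.re = (f z).re / a
          rw [clmp_eq hb.2, hzeq]; ring
        · simp
      rw [hV, hH]
      apply Complex.ext
      · rw [mk2_re]
        show a * ((f z).re / a) + 0 * 0 = (f z).re
        field_simp; ring
      · rw [mk2_im]
        show 0 * ((f z).re / a) + h * 0 = (f z).im
        rw [hfz.1]; ring
    · -- top edge
      have hzeq : (⟨z.re, 1⟩:ℂ) = z := Complex.ext rfl ht.1.symm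
      have hfz : f z ∈ topE a h := by rw [← htop]; exact mem_image_of_mem f ht
      have hV : Vmap ψ₀ ψ₁ z = ⟨z.re, 1⟩ := by
        apply Complex.ext
        · simp
        · rw [Vmap_im, ht.1, eψ₀1, eψ₁1]; ring
      have hH : Hmap Φ₀ Φ₁ (⟨z.re, 1⟩:ℂ) = ⟨(f z).re / a, 1⟩ := by
        apply Complex.ext
        · rw [Hmap_re]
          show (1 - 1) * Φ₀ z.re + 1 * Φ₁ z.re = (f z).re / a
          rw [hΦ₁def]
          show (1 - 1) * Φ₀ z.re + 1 * ((f ⟨clmp z.re, 1⟩).re / a) = (f z).re / a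
          rw [clmp_eq ht.2, hzeq]; ring
        · simp
      rw [hV, hH]
      apply Complex.ext
      · rw [mk2_re]
        show a * ((f z).re / a) + 0 * 1 = (f z).re
        field_simp; ring
      · rw [mk2_im]
        show 0 * ((f z).re / a) + h * 1 = (f z).im
        rw [hfz.1]; ring
    · -- left edge
      have hzeq : (⟨0, z.im⟩:ℂ) = z := Complex.ext hl.1.symm rfl
      have hfz : f z ∈ leftE a h := by rw [← hleft]; exact mem_image_of_mem f hl
      have hψval : ψ₀ z.im = (f z).im / h := by
        rw [hψ₀def]
        show (f ⟨0, clmp z.im⟩).im / h = (f z).im / h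
        rw [clmp_eq hl.2, hzeq]
      have hV : Vmap ψ₀ ψ₁ z = ⟨0, (f z).im / h⟩ := by
        apply Complex.ext
        · rw [Vmap_re, hl.1]
        · rw [Vmap_im, hl.1, hψval]; ring
      have hmem' : (f z).im / h ∈ Icc (0:ℝ) 1 :=
        ⟨div_nonneg hfz.2.1 hh0.le, (div_le_one hh0).mpr hfz.2.2⟩
      have hH : Hmap Φ₀ Φ₁ (⟨0, (f z).im / h⟩:ℂ) = ⟨0, (f z).im / h⟩ := by
        apply Complex.ext
        · rw [Hmap_re]
          show (1 - (f z).im / h) * Φ₀ 0 + ((f z).im / h) * Φ₁ 0 = 0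
          rw [eΦ₀0, eΦ₁0]; ring
        · simp
      rw [hV, hH]
      apply Complex.ext
      · rw [mk2_re]
        show a * 0 + 0 * ((f z).im / h) = (f z).re
        rw [hfz.1]; ring
      · rw [mk2_im]
        show 0 * 0 + h * ((f z).im / h) = (f z).im
        field_simp; ring
    · -- right edge
      have hzeq : (⟨1, z.im⟩:ℂ) = z := Complex.ext hr.1.symm rfl
      have hfz : f z ∈ rightE a h := by rw [← hright]; exact mem_image_of_mem f hr
      have hψval : ψ₁ z.im = (f z).im / h := by
        rw [hψ₁def]
        show (f ⟨1, clmp z.im⟩).im / h = (f z).im / h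
        rw [clmp_eq hr.2, hzeq]
      have hV : Vmap ψ₀ ψ₁ z = ⟨1, (f z).im / h⟩ := by
        apply Complex.ext
        · rw [Vmap_re, hr.1]
        · rw [Vmap_im, hr.1, hψval]; ring
      have hH : Hmap Φ₀ Φ₁ (⟨1, (f z).im / h⟩:ℂ) = ⟨1, (f z).im / h⟩ := by
        apply Complex.ext
        · rw [Hmap_re]
          show (1 - (f z).im / h) * Φ₀ 1 + ((f z).im / h) * Φ₁ 1 = 1
          rw [eΦ₀1, eΦ₁1]; ring
        · simp
      rw [hV, hH]
      apply Complex.ext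
      · rw [mk2_re]
        show a * 1 + 0 * ((f z).im / h) = (f z).re
        rw [hfz.1]; ring
      · rw [mk2_im]
        show 0 * 1 + h * ((f z).im / h) = (f z).im
        field_simp; ring
  · -- the distortion inequality a.e.
    have hdψ₀ : ∀ᵐ t : ℝ, DifferentiableAt ℝ ψ₀ t := (oneD_lip hL hgψ₀ hblψ₀).ae_differentiableAt
    have hdψ₁ : ∀ᵐ t : ℝ, DifferentiableAt ℝ ψ₁ t := (oneD_lip hL hgψ₁ hblψ₁).ae_differentiableAt
    have hdΦ₀ : ∀ᵐ t : ℝ, DifferentiableAt ℝ Φ₀ t := (oneD_lip hL hgΦ₀ hblΦ₀).ae_differentiableAt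
    have hdΦ₁ : ∀ᵐ t : ℝ, DifferentiableAt ℝ Φ₁ t := (oneD_lip hL hgΦ₁ hblΦ₁).ae_differentiableAt
    have hNX : volume {t : ℝ | ¬ (DifferentiableAt ℝ Φ₀ t ∧ DifferentiableAt ℝ Φ₁ t)} = 0 :=
      ae_iff.mp (hdΦ₀.and hdΦ₁)
    have hNY : volume {t : ℝ | ¬ (DifferentiableAt ℝ ψ₀ t ∧ DifferentiableAt ℝ ψ₁ t)} = 0 :=
      ae_iff.mp (hdψ₀.and hdψ₁)
    have hE01 : volume ({0, 1} : Set ℝ) = 0 :=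
      ((Set.countable_singleton (1:ℝ)).insert 0).measure_zero volume
    have e1 : ∀ᵐ z : ℂ, ¬ z.re ∈ {t : ℝ | ¬ (DifferentiableAt ℝ Φ₀ t ∧ DifferentiableAt ℝ Φ₁ t)} :=
      measure_eq_zero_iff_ae_notMem.1 (null_re hNX)
    have e2 : ∀ᵐ z : ℂ, ¬ z.im ∈ {t : ℝ | ¬ (DifferentiableAt ℝ ψ₀ t ∧ DifferentiableAt ℝ ψ₁ t)} :=
      measure_eq_zero_iff_ae_notMem.1 (null_im hNY)
    have e3 : ∀ᵐ z : ℂ, ¬ z.re ∈ ({0, 1} : Set ℝ) :=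
      measure_eq_zero_iff_ae_notMem.1 (null_re hE01)
    have e4 : ∀ᵐ z : ℂ, ¬ z.im ∈ ({0, 1} : Set ℝ) :=
      measure_eq_zero_iff_ae_notMem.1 (null_im hE01)
    rw [ae_restrict_iff' (measurable_rectC 1 1)]
    filter_upwards [e1, e2, e3, e4] with z hz1 hz2 hz3 hz4 hzrect
    obtain ⟨hzre, hzim⟩ := mem_rectC.1 hzrect
    simp only [mem_setOf_eq, not_not] at hz1 hz2
    simp only [mem_insert_iff, mem_singleton_iff, not_or] at hz3 hz4
    have hx : z.re ∈ Ioo (0:ℝ) 1 :=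
      ⟨lt_of_le_of_ne hzre.1 (Ne.symm hz3.1), lt_of_le_of_ne hzre.2 hz3.2⟩
    have hy : z.im ∈ Ioo (0:ℝ) 1 :=
      ⟨lt_of_le_of_ne hzim.1 (Ne.symm hz4.1), lt_of_le_of_ne hzim.2 hz4.2⟩
    -- derivative bounds
    have hdc₀ : deriv Φ₀ z.re ∈ Icc (1/L) L := oneD_deriv hL hblΦ₀ eΦ₀0 eΦ₀1 hcΦ₀ hx hz1.1
    have hdc₁ : deriv Φ₁ z.re ∈ Icc (1/L) L := oneD_deriv hL hblΦ₁ eΦ₁0 eΦ₁1 hcΦ₁ hx hz1.2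
    have hdd₀ : deriv ψ₀ z.im ∈ Icc (1/L) L := oneD_deriv hL hblψ₀ eψ₀0 eψ₀1 hcψ₀ hy hz2.1
    have hdd₁ : deriv ψ₁ z.im ∈ Icc (1/L) L := oneD_deriv hL hblψ₁ eψ₁0 eψ₁1 hcψ₁ hy hz2.2
    -- the derivative of the composition
    have hVd : HasFDerivAt (Vmap ψ₀ ψ₁)
        (mk2 1 0 (ψ₁ z.im - ψ₀ z.im) ((1 - z.re) * deriv ψ₀ z.im + z.re * deriv ψ₁ z.im)) z :=
      hasFDerivAt_Vmap ψ₀ ψ₁ z _ _ hz2.1.hasDerivAt hz2.2.hasDerivAt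
    have hHd : HasFDerivAt (Hmap Φ₀ Φ₁)
        (mk2 ((1 - (Vmap ψ₀ ψ₁ z).im) * deriv Φ₀ z.re + (Vmap ψ₀ ψ₁ z).im * deriv Φ₁ z.re)
          (Φ₁ z.re - Φ₀ z.re) 0 1) (Vmap ψ₀ ψ₁ z) := by
      have h1 : HasDerivAt Φ₀ (deriv Φ₀ z.re) (Vmap ψ₀ ψ₁ z).re := by
        rw [Vmap_re]; exact hz1.1.hasDerivAt
      have h2 : HasDerivAt Φ₁ (deriv Φ₁ z.re) (Vmap ψ₀ ψ₁ z).re := by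
        rw [Vmap_re]; exact hz1.2.hasDerivAt
      have := hasFDerivAt_Hmap Φ₀ Φ₁ (Vmap ψ₀ ψ₁ z) _ _ h1 h2
      simpa only [Vmap_re] using this
    have hFd0 := ((mk2 a 0 0 h).hasFDerivAt).comp z (hHd.comp z hVd)
    have hFd : HasFDerivAt (fun z => mk2 a 0 0 h (Hmap Φ₀ Φ₁ (Vmap ψ₀ ψ₁ z)))
        (((mk2 a 0 0 h).comp
          ((mk2 ((1 - (Vmap ψ₀ ψ₁ z).im) * deriv Φ₀ z.re + (Vmap ψ₀ ψ₁ z).im * deriv Φ₁ z.re)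
            (Φ₁ z.re - Φ₀ z.re) 0 1).comp
            (mk2 1 0 (ψ₁ z.im - ψ₀ z.im)
              ((1 - z.re) * deriv ψ₀ z.im + z.re * deriv ψ₁ z.im))))) z := hFd0
    set u := (1 - (Vmap ψ₀ ψ₁ z).im) * deriv Φ₀ z.re + (Vmap ψ₀ ψ₁ z).im * deriv Φ₁ z.re
      with hu_def
    set r := Φ₁ z.re - Φ₀ z.re with hr_def
    set s := ψ₁ z.im - ψ₀ z.im with hs_def
    set q := (1 - z.re) * deriv ψ₀ z.im + z.re * deriv ψ₁ z.im with hq_def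
    clear_value u r s q
    have hDFeq : (mk2 a 0 0 h).comp ((mk2 u r 0 1).comp (mk2 1 0 s q)) =
        mk2 (a*(u + r*s)) (a*(r*q)) (h*s) (h*q) := by
      rw [mk2_comp, mk2_comp]
      congr 1 <;> ring
    rw [hDFeq] at hFd
    -- bounds on the entries
    have hv : (Vmap ψ₀ ψ₁ z).im ∈ Icc (0:ℝ) 1 := (mem_rectC.1 (hbijV.mapsTo hzrect)).2
    have hu_mem : u ∈ Icc (1/L) L := by rw [hu_def]; exact convexCombo_mem hv hdc₀ hdc₁
    have hq_mem : q ∈ Icc (1/L) L := by rw [hq_def]; exact convexCombo_mem hzre hdd₀ hdd₁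
    have hiL : (0:ℝ) < 1/L := by positivity
    have hu0 : 0 < u := lt_of_lt_of_le hiL hu_mem.1
    have hq0 : 0 < q := lt_of_lt_of_le hiL hq_mem.1
    have hr_abs : |r| ≤ 1 := by
      rw [hr_def]
      have h1 := oneD_range hL hblΦ₀ eΦ₀0 eΦ₀1 hcΦ₀ (Ioo_subset_Icc_self hx)
      have h2 := oneD_range hL hblΦ₁ eΦ₁0 eΦ₁1 hcΦ₁ (Ioo_subset_Icc_self hx)
      rw [abs_le]; constructor <;> [linarith [h1.2, h2.1]; linarith [h1.1, h2.2]]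
    have hs_abs : |s| ≤ 1 := by
      rw [hs_def]
      have h1 := oneD_range hL hblψ₀ eψ₀0 eψ₀1 hcψ₀ (Ioo_subset_Icc_self hy)
      have h2 := oneD_range hL hblψ₁ eψ₁0 eψ₁1 hcψ₁ (Ioo_subset_Icc_self hy)
      rw [abs_le]; constructor <;> [linarith [h1.2, h2.1]; linarith [h1.1, h2.2]]
    clear * - hp0 hp2 hL hL0 ha ha0 hh0 hh1 hha hap hu_mem hq_mem hiL hu0 hq0 hr_abs hs_abs hFd
    -- determinant and norm of DF
    have hdet1 : a*(u + r*s)*(h*q) - a*(r*q)*(h*s) = a*h*(q*u) := by ring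
    have hdet_pos : (0:ℝ) < a*h*(q*u) := by positivity
    have hqu_ge : 1/L^2 ≤ q*u := by
      have h1 : (1/L)*(1/L) ≤ q*u :=
        mul_le_mul hq_mem.1 hu_mem.1 hiL.le (le_trans hiL.le hq_mem.1)
      calc 1/L^2 = (1/L)*(1/L) := by ring
      _ ≤ q*u := h1
    have hqu_le : q*u ≤ L^2 := by nlinarith [hq_mem.2, hu_mem.2, hq0, hu0]
    have hNle : ‖mk2 (a*(u + r*s)) (a*(r*q)) (h*s) (h*q)‖ ≤ 5*L*a := by
      refine le_trans (mk2_norm_le _ _ _ _) ?_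
      have hu_abs : |u| ≤ L := abs_le.mpr ⟨by linarith [hu_mem.1], hu_mem.2⟩
      have hrs : |r*s| ≤ 1 := by
        rw [abs_mul]
        nlinarith [abs_nonneg r, abs_nonneg s, hr_abs, hs_abs]
      have b1 : |a*(u + r*s)| ≤ a*(L+1) := by
        rw [abs_mul, abs_of_pos ha0]
        have : |u + r*s| ≤ L + 1 := le_trans (abs_add_le _ _) (by linarith)
        nlinarith
      have b2 : |a*(r*q)| ≤ a*L := by
        rw [abs_mul, abs_of_pos ha0, abs_mul, abs_of_pos hq0]
        have : |r| * q ≤ 1 * L := mul_le_mul hr_abs hq_mem.2 hq0.le zero_le_one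
        nlinarith
      have b3 : |h*s| ≤ a := by
        rw [abs_mul, abs_of_pos hh0]
        nlinarith [abs_nonneg s, hs_abs]
      have b4 : |h*q| ≤ a*L := by
        rw [abs_mul, abs_of_pos hh0, abs_of_pos hq0]
        nlinarith [hq_mem.2]
      nlinarith [ha0, hL]
    have hNge : a/(2*L^3) ≤ ‖mk2 (a*(u + r*s)) (a*(r*q)) (h*s) (h*q)‖ := by
      have happ : (mk2 (a*(u + r*s)) (a*(r*q)) (h*s) (h*q) (⟨q, -s⟩:ℂ)).re = a*(u*q) := by
        rw [mk2_re]; ring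
      have h5 : a*(u*q) ≤ ‖mk2 (a*(u + r*s)) (a*(r*q)) (h*s) (h*q) (⟨q, -s⟩:ℂ)‖ := by
        calc a*(u*q) = (mk2 (a*(u + r*s)) (a*(r*q)) (h*s) (h*q) (⟨q, -s⟩:ℂ)).re := happ.symm
        _ ≤ |(mk2 (a*(u + r*s)) (a*(r*q)) (h*s) (h*q) (⟨q, -s⟩:ℂ)).re| := le_abs_self _
        _ ≤ ‖mk2 (a*(u + r*s)) (a*(r*q)) (h*s) (h*q) (⟨q, -s⟩:ℂ)‖ := Complex.abs_re_le_norm _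
      have hvv : ‖(⟨q, -s⟩:ℂ)‖ ≤ 2*L := by
        refine le_trans (Complex.norm_le_abs_re_add_abs_im _) ?_
        have e1 : |(⟨q, -s⟩:ℂ).re| = q := abs_of_pos hq0
        have e2 : |(⟨q, -s⟩:ℂ).im| = |s| := abs_neg s
        rw [e1, e2]
        linarith [hq_mem.2, hs_abs, hL]
      have h6 := (mk2 (a*(u + r*s)) (a*(r*q)) (h*s) (h*q)).le_opNorm (⟨q, -s⟩:ℂ)
      have hstep : a*(u*q) ≤ ‖mk2 (a*(u + r*s)) (a*(r*q)) (h*s) (h*q)‖ * (2*L) :=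
        le_trans h5 (le_trans h6 (mul_le_mul_of_nonneg_left hvv (norm_nonneg _)))
      rw [div_le_iff₀ (by positivity)]
      have t1 : a * (1/L^2) ≤ a*(u*q) := by
        refine mul_le_mul_of_nonneg_left ?_ ha0.le
        calc 1/L^2 = 1/L^2 := rfl
        _ ≤ q*u := hqu_ge
        _ = u*q := by ring
      calc a = (a * (1/L^2)) * L^2 := by field_simp
      _ ≤ (‖mk2 (a*(u + r*s)) (a*(r*q)) (h*s) (h*q)‖*(2*L))*L^2 :=
          mul_le_mul_of_nonneg_right (le_trans t1 hstep) (by positivity)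
      _ = ‖mk2 (a*(u + r*s)) (a*(r*q)) (h*s) (h*q)‖*(2*L^3) := by ring
    have hApos : 0 < a ^ p := Real.rpow_pos_of_pos ha0 p
    have hsq : ((2:ℝ)) = ((2:ℕ):ℝ) := by norm_num
    have hNp_le : ‖mk2 (a*(u + r*s)) (a*(r*q)) (h*s) (h*q)‖^p ≤ 25*L^2 * a^p := by
      calc ‖mk2 (a*(u + r*s)) (a*(r*q)) (h*s) (h*q)‖^p ≤ (5*L*a)^p :=
          Real.rpow_le_rpow (norm_nonneg _) hNle hp0
      _ = (5*L)^p * a^p := by rw [← Real.mul_rpow (by positivity) ha0.le]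
      _ ≤ (5*L)^(2:ℝ) * a^p :=
          mul_le_mul_of_nonneg_right
            (Real.rpow_le_rpow_of_exponent_le (by linarith) hp2) hApos.le
      _ = 25*L^2 * a^p := by rw [hsq, Real.rpow_natCast]; ring
    have hNp_ge : a^p/(4*L^6) ≤ ‖mk2 (a*(u + r*s)) (a*(r*q)) (h*s) (h*q)‖^p := by
      have hb1 : ((2*L^3):ℝ)^p ≤ ((2*L^3):ℝ)^(2:ℝ) :=
        Real.rpow_le_rpow_of_exponent_le (by nlinarith) hp2
      have hb2 : ((2*L^3):ℝ)^(2:ℝ) = 4*L^6 := by rw [hsq, Real.rpow_natCast]; ring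
      have hb3 : ((2*L^3):ℝ)^p ≤ 4*L^6 := hb2 ▸ hb1
      have hb4 : (0:ℝ) < ((2*L^3):ℝ)^p := Real.rpow_pos_of_pos (by positivity) p
      calc a^p/(4*L^6) ≤ a^p/(((2*L^3):ℝ)^p) := by gcongr
      _ = (a/(2*L^3))^p := (Real.div_rpow ha0.le (by positivity : (0:ℝ) ≤ 2*L^3) p).symm
      _ ≤ _ := Real.rpow_le_rpow (by positivity) hNge hp0
    refine ⟨hFd.differentiableAt, ?_, ?_⟩
    · rw [hFd.fderiv, mk2_det, hdet1, abs_of_pos hdet_pos]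
      have key1 : 1/(25*L^8) * (a*h*(q*u)) ≤ a^p/(4*L^6) := by
        rw [← hap, one_div_mul_eq_div, div_le_div_iff₀ (by positivity) (by positivity)]
        have t : a*h*(q*u) ≤ a*h*L^2 := mul_le_mul_of_nonneg_left hqu_le (by positivity)
        calc a*h*(q*u)*(4*L^6) ≤ (a*h*L^2)*(4*L^6) := by nlinarith [pow_pos hL0 6]
        _ = 4*((a*h)*L^8) := by ring
        _ ≤ 25*((a*h)*L^8) := by nlinarith [mul_pos ha0 hh0, pow_pos hL0 8]
        _ = a*h*(25*L^8) := by ring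
      exact le_trans key1 hNp_ge
    · rw [hFd.fderiv, mk2_det, hdet1, abs_of_pos hdet_pos]
      have t1 : (a*h)*(1/L^2) ≤ (a*h)*(q*u) :=
        mul_le_mul_of_nonneg_left hqu_ge (by positivity)
      have hL26 : L^2 ≤ L^6 := pow_le_pow_right₀ hL (by norm_num)
      have key2 : 25*L^2 * a^p ≤ 25*L^8 * (a*h*(q*u)) := by
        rw [← hap]
        calc 25*L^2*(a*h) ≤ 25*L^6*(a*h) := by nlinarith [mul_pos ha0 hh0]
        _ = 25*L^8*((a*h)*(1/L^2)) := by field_simp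
        _ ≤ 25*L^8*((a*h)*(q*u)) := mul_le_mul_of_nonneg_left t1 (by positivity)
        _ = 25*L^8*(a*h*(q*u)) := by ring
      exact le_trans hNp_le key2
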